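/- Let A be the group with presentation ⟨a, b | a^k b = b a^k⟩ with k ≥ 2. Then the mapping a ↦ a, b ↦ ba determines a well-defined automorphism η of A of infinite order. -/

import Mathlib

/-- Relator for `A = ⟨a, b | aᵏ b = b aᵏ⟩`, with `a = of 0`, `b = of 1`. -/
def relEvenDihedral (k : ℕ) : Set (FreeGroup (Fin 2)) :=
  {FreeGroup.of 0 ^ k * FreeGroup.of 1 * (FreeGroup.of 0 ^ k)⁻¹ * (FreeGroup.of 1)⁻¹}

namespace Stmt8

variable (k : ℕ)

abbrev A := PresentedGroup (relEvenDihedral k)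

lemma comm : (PresentedGroup.of 0 : A k) ^ k * PresentedGroup.of 1 =
    PresentedGroup.of 1 * (PresentedGroup.of 0 : A k) ^ k := by
  have h : (FreeGroup.of 0 ^ k * FreeGroup.of 1 * (FreeGroup.of 0 ^ k)⁻¹ * (FreeGroup.of 1)⁻¹ :
      FreeGroup (Fin 2)) ∈ Subgroup.normalClosure (relEvenDihedral k) :=
    Subgroup.subset_normalClosure rfl
  have h1 : (PresentedGroup.of 0 : A k) ^ k * PresentedGroup.of 1 *
      ((PresentedGroup.of 0 : A k) ^ k)⁻¹ * (PresentedGroup.of 1 : A k)⁻¹ = 1 :=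
    (QuotientGroup.eq_one_iff _).2 h
  rw [mul_inv_eq_one, mul_inv_eq_iff_eq_mul] at h1
  exact h1

lemma relcheck (m : ℤ) : ∀ r ∈ relEvenDihedral k,
    FreeGroup.lift (fun i : Fin 2 => if i = 0 then (PresentedGroup.of 0 : A k)
      else PresentedGroup.of 1 * PresentedGroup.of 0 ^ m) r = 1 := by
  rintro r rfl
  set a : A k := PresentedGroup.of 0
  set b : A k := PresentedGroup.of 1
  simp only [map_mul, map_pow, map_inv, FreeGroup.lift_apply_of, if_pos rfl]
  have hc : a ^ k * b = b * a ^ k := comm k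
  have hc' : a ^ k * (b * a ^ m) = (b * a ^ m) * a ^ k := by
    calc a ^ k * (b * a ^ m) = (a ^ k * b) * a ^ m := by group
    _ = b * a ^ k * a ^ m := by rw [hc]
    _ = (b * a ^ m) * a ^ k := by group
  rw [mul_inv_eq_one, mul_inv_eq_iff_eq_mul]
  exact hc'

/-- The endomorphism `a ↦ a, b ↦ b a^m`. -/
noncomputable def φ (m : ℤ) : A k →* A k := PresentedGroup.toGroup (relcheck k m)

lemma φ_of0 (m : ℤ) : φ k m (PresentedGroup.of 0) = PresentedGroup.of 0 :=
  PresentedGroup.toGroup.of _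

lemma φ_of1 (m : ℤ) : φ k m (PresentedGroup.of 1) =
    PresentedGroup.of 1 * PresentedGroup.of 0 ^ m := by
  show PresentedGroup.toGroup (relcheck k m) _ = _
  simpa using PresentedGroup.toGroup.of (relcheck k m) (x := 1)

lemma φ_comp (m : ℤ) : (φ k m).comp (φ k (-m)) = MonoidHom.id (A k) := by
  ext x
  match x with
  | 0 => simp [MonoidHom.comp_apply, φ_of0]
  | 1 =>
    simp only [MonoidHom.comp_apply, MonoidHom.id_apply, φ_of1, map_mul, map_zpow, φ_of0]
    group

/-- The automorphism `η : a ↦ a, b ↦ b a`. -/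
noncomputable def η : MulAut (A k) :=
  MonoidHom.toMulEquiv (φ k 1) (φ k (-1)) (by simpa using φ_comp k (-1)) (φ_comp k 1)

lemma η_of0 : η k (PresentedGroup.of 0) = PresentedGroup.of 0 := φ_of0 k 1
lemma η_of1 : η k (PresentedGroup.of 1) = PresentedGroup.of 1 * PresentedGroup.of 0 := by
  show φ k 1 (PresentedGroup.of 1) = _
  simpa using φ_of1 k 1

lemma η_pow_of0 (n : ℕ) : (η k ^ n) (PresentedGroup.of 0) = PresentedGroup.of 0 := by
  induction n with
  | zero => rfl
  | succ n ih => rw [pow_succ, MulAut.mul_apply, η_of0, ih]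

lemma η_pow_of1 (n : ℕ) : (η k ^ n) (PresentedGroup.of 1) =
    PresentedGroup.of 1 * PresentedGroup.of 0 ^ n := by
  induction n with
  | zero => simp
  | succ n ih =>
    rw [pow_succ, MulAut.mul_apply, η_of1, map_mul, ih, η_pow_of0, pow_succ, mul_assoc]

/-- Projection to `ℤ` sending `a ↦ 1, b ↦ 0`. -/
noncomputable def χ : A k →* Multiplicative ℤ :=
  PresentedGroup.toGroup (f := fun i : Fin 2 => if i = 0 then Multiplicative.ofAdd 1 else 1)
    (by rintro r rfl; simp [map_mul, map_pow, map_inv])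

lemma of0_pow_ne_one (n : ℕ) (hn : n ≠ 0) : (PresentedGroup.of 0 : A k) ^ n ≠ 1 := by
  intro h
  have := congrArg (χ k) h
  rw [map_pow, map_one] at this
  have h0 : χ k (PresentedGroup.of 0) = Multiplicative.ofAdd 1 := by
    show PresentedGroup.toGroup _ (PresentedGroup.of 0) = _
    simpa using PresentedGroup.toGroup.of (f := fun i : Fin 2 =>
      if i = 0 then Multiplicative.ofAdd (1 : ℤ) else 1) _ (x := 0)
  rw [h0] at this
  have : (n : ℤ) = 0 := by
    have := congrArg Multiplicative.toAdd this
    simpa using this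
  exact hn (by exact_mod_cast this)

end Stmt8

/-- for `A = ⟨a, b | aᵏ b = b aᵏ⟩` with `k ≥ 2`, the assignment
`a ↦ a`, `b ↦ b a` determines a well-defined automorphism `η` of `A` of infinite order. -/
theorem stmt8 (k : ℕ) (hk : 2 ≤ k) :
    ∃ η : MulAut (PresentedGroup (relEvenDihedral k)),
      η (PresentedGroup.of 0) = PresentedGroup.of 0 ∧
      η (PresentedGroup.of 1) = PresentedGroup.of 1 * PresentedGroup.of 0 ∧
      ¬ IsOfFinOrder η := by
  refine ⟨Stmt8.η k, Stmt8.η_of0 k, Stmt8.η_of1 k, ?_⟩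
  intro hfin
  obtain ⟨n, hn, hpow⟩ := hfin.exists_pow_eq_one
  have h1 : (Stmt8.η k ^ n) (PresentedGroup.of 1) = PresentedGroup.of 1 := by
    rw [hpow]; rfl
  rw [Stmt8.η_pow_of1] at h1
  have : (PresentedGroup.of 0 : PresentedGroup (relEvenDihedral k)) ^ n = 1 := by
    have h2 : PresentedGroup.of 1 * PresentedGroup.of 0 ^ n =
        PresentedGroup.of 1 * (1 : PresentedGroup (relEvenDihedral k)) := by rw [mul_one]; exact h1
    exact mul_left_cancel h2
  exact Stmt8.of0_pow_ne_one k n hn.ne' this
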